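/- Let λ ∈ (0,1), d ≥ 1 (say d=1), γ ∈ [1,∞), and for an integer j ≥ 1 define A(λ,γ,j) = ∑_{k≥1} k e^{-(1-λ)γ(kj + k(k-1)/2)}, B(λ,γ,j) = ∑_{1≤k≤j-1} k e^{-(1+λ)γ(kj - k(k+1)/2)}, and C(λ,γ,j) = ∑_{k≥j} k e^{-(1+λ)γ(j(j-1)/2 + k - j + 1)}. If λ > 1/3, then lim_{γ→∞} sup_{j≥1} [B(λ,γ,j) + C(λ,γ,j)] e^{(1-λ)γ j} = 0; in particular for γ large enough, A(λ,γ,j) > B(λ,γ,j) + C(λ,γ,j) for every j ≥ 1 (since A(λ,γ,j) ≥ e^{-(1-λ)γ j}). -/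

import Mathlib

private lemma ratio_le : 2 * Real.exp (-1) ≤ 3 / 4 := by
  have h := Real.exp_one_gt_d9
  have h2 : Real.exp 1 * Real.exp (-1) = 1 := by
    rw [← Real.exp_add]; norm_num
  nlinarith [Real.exp_pos (-1)]

private lemma cast_succ_le_two_pow (n : ℕ) : (n : ℝ) + 1 ≤ 2 ^ n := by
  have h : (n : ℕ) + 1 ≤ 2 ^ n := Nat.lt_two_pow_self (n := n)
  calc ((n : ℝ) + 1) = ((n + 1 : ℕ) : ℝ) := by push_cast; ring
    _ ≤ ((2 ^ n : ℕ) : ℝ) := by exact_mod_cast h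
    _ = 2 ^ n := by push_cast; ring

private lemma Cbound (lam γ : ℝ) (hlam0 : 0 < lam) (hγ : 1 ≤ γ)
    (j : ℕ) (hj : 1 ≤ j) :
    (∑' n : ℕ, ((j : ℝ) + n) *
        Real.exp (-(1 + lam) * γ * ((j : ℝ) * ((j : ℝ) - 1) / 2 + (n : ℝ) + 1)))
      ≤ 4 * j * Real.exp (-(1 + lam) * γ * ((j : ℝ) * ((j : ℝ) - 1) / 2 + 1)) := by
  have hj1 : (1 : ℝ) ≤ j := by exact_mod_cast hj
  set a : ℝ := (1 + lam) * γ with ha_def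
  have ha1 : 1 ≤ a := by nlinarith
  have ha0 : 0 < a := by linarith
  set D : ℝ := (j : ℝ) * ((j : ℝ) - 1) / 2 with hD_def
  set q : ℝ := 2 * Real.exp (-a) with hq_def
  have hq0 : 0 ≤ q := by positivity
  have hqle : q ≤ 3 / 4 := by
    have hmono : Real.exp (-a) ≤ Real.exp (-1) := Real.exp_le_exp.2 (by linarith)
    calc q ≤ 2 * Real.exp (-1) := by rw [hq_def]; linarith
      _ ≤ 3 / 4 := ratio_le
  have hq1 : q < 1 := by linarith
  have hterm : ∀ n : ℕ, ((j : ℝ) + n) * Real.exp (-(1 + lam) * γ * (D + (n : ℝ) + 1))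
      ≤ ((j : ℝ) * Real.exp (-a * (D + 1))) * q ^ n := by
    intro n
    have hsplit : Real.exp (-(1 + lam) * γ * (D + (n : ℝ) + 1))
        = Real.exp (-a * (D + 1)) * Real.exp (-a) ^ n := by
      rw [← Real.exp_nat_mul, ← Real.exp_add]
      congr 1
      rw [ha_def]; ring
    rw [hsplit]
    have h2n := cast_succ_le_two_pow n
    have hjn : (j : ℝ) + n ≤ (j : ℝ) * 2 ^ n := by
      nlinarith [Nat.cast_nonneg (α := ℝ) n, mul_nonneg (by linarith : (0:ℝ) ≤ (j:ℝ) - 1)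
        (Nat.cast_nonneg (α := ℝ) n)]
    calc ((j : ℝ) + n) * (Real.exp (-a * (D + 1)) * Real.exp (-a) ^ n)
        ≤ ((j : ℝ) * 2 ^ n) * (Real.exp (-a * (D + 1)) * Real.exp (-a) ^ n) := by
          apply mul_le_mul_of_nonneg_right hjn (by positivity)
      _ = ((j : ℝ) * Real.exp (-a * (D + 1))) * q ^ n := by
          rw [hq_def, mul_pow]; ring
  have hsumR : Summable (fun n : ℕ => ((j : ℝ) * Real.exp (-a * (D + 1))) * q ^ n) :=
    (summable_geometric_of_lt_one hq0 hq1).mul_left _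
  have hnonneg : ∀ n : ℕ,
      0 ≤ ((j : ℝ) + n) * Real.exp (-(1 + lam) * γ * (D + (n : ℝ) + 1)) := by
    intro n; positivity
  have hsumL : Summable (fun n : ℕ =>
      ((j : ℝ) + n) * Real.exp (-(1 + lam) * γ * (D + (n : ℝ) + 1))) :=
    Summable.of_nonneg_of_le hnonneg hterm hsumR
  have hgoal_exp : -(1 + lam) * γ * (D + 1) = -a * (D + 1) := by rw [ha_def]; ring
  calc (∑' n : ℕ, ((j : ℝ) + n) * Real.exp (-(1 + lam) * γ * (D + (n : ℝ) + 1)))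
      ≤ ∑' n : ℕ, ((j : ℝ) * Real.exp (-a * (D + 1))) * q ^ n :=
        Summable.tsum_le_tsum hterm hsumL hsumR
    _ = ((j : ℝ) * Real.exp (-a * (D + 1))) * (1 - q)⁻¹ := by
        rw [tsum_mul_left, tsum_geometric_of_lt_one hq0 hq1]
    _ ≤ ((j : ℝ) * Real.exp (-a * (D + 1))) * 4 := by
        apply mul_le_mul_of_nonneg_left _ (by positivity)
        have h14 : (1 / 4 : ℝ) ≤ 1 - q := by linarith
        have hi := inv_anti₀ (by norm_num : (0:ℝ) < 1 / 4) h14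
        norm_num at hi
        linarith
    _ = 4 * j * Real.exp (-(1 + lam) * γ * (D + 1)) := by
        rw [hgoal_exp]; ring

private lemma Bbound (lam γ : ℝ) (hlam0 : 0 < lam) (hγ : 0 < γ) (j : ℕ) (hj : 1 ≤ j) :
    (∑ k ∈ Finset.Icc 1 (j - 1), (k : ℝ) *
        Real.exp (-(1 + lam) * γ * ((k : ℝ) * j - (k : ℝ) * ((k : ℝ) + 1) / 2)))
      ≤ ((j : ℝ) - 1) * j * Real.exp (-(1 + lam) * γ * ((j : ℝ) - 1)) := by
  have hpos : 0 < (1 + lam) * γ := by positivity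
  have hterm : ∀ k ∈ Finset.Icc 1 (j - 1), (k : ℝ) *
      Real.exp (-(1 + lam) * γ * ((k : ℝ) * j - (k : ℝ) * ((k : ℝ) + 1) / 2))
      ≤ (j : ℝ) * Real.exp (-(1 + lam) * γ * ((j : ℝ) - 1)) := by
    intro k hk
    simp only [Finset.mem_Icc] at hk
    have hk1 : (1 : ℝ) ≤ k := by exact_mod_cast hk.1
    have hk2 : (k : ℝ) ≤ (j : ℝ) - 1 := by
      have h' : (k : ℝ) ≤ ((j - 1 : ℕ) : ℝ) := by exact_mod_cast hk.2
      rwa [Nat.cast_sub hj, Nat.cast_one] at h'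
    have hexp : (j : ℝ) - 1 ≤ (k : ℝ) * j - (k : ℝ) * ((k : ℝ) + 1) / 2 := by
      nlinarith [mul_nonneg (by linarith : (0:ℝ) ≤ (k:ℝ) - 1) (by linarith : (0:ℝ) ≤ (j:ℝ) - 1 - k),
        mul_nonneg (by linarith : (0:ℝ) ≤ (k:ℝ) - 1) (by linarith : (0:ℝ) ≤ (j:ℝ) - 1)]
    have hmono : Real.exp (-(1 + lam) * γ * ((k : ℝ) * j - (k : ℝ) * ((k : ℝ) + 1) / 2))
        ≤ Real.exp (-(1 + lam) * γ * ((j : ℝ) - 1)) := by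
      apply Real.exp_le_exp.2
      nlinarith [mul_le_mul_of_nonneg_left hexp hpos.le]
    have hkj : (k : ℝ) ≤ j := by linarith
    exact mul_le_mul hkj hmono (Real.exp_pos _).le (by positivity)
  calc (∑ k ∈ Finset.Icc 1 (j - 1), (k : ℝ) *
        Real.exp (-(1 + lam) * γ * ((k : ℝ) * j - (k : ℝ) * ((k : ℝ) + 1) / 2)))
      ≤ ∑ _k ∈ Finset.Icc 1 (j - 1),
          (j : ℝ) * Real.exp (-(1 + lam) * γ * ((j : ℝ) - 1)) :=
        Finset.sum_le_sum hterm
    _ = ((j - 1 : ℕ) : ℝ) * ((j : ℝ) * Real.exp (-(1 + lam) * γ * ((j : ℝ) - 1))) := by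
        rw [Finset.sum_const, Nat.card_Icc, nsmul_eq_mul]
        norm_num
    _ = ((j : ℝ) - 1) * j * Real.exp (-(1 + lam) * γ * ((j : ℝ) - 1)) := by
        rw [Nat.cast_sub hj, Nat.cast_one]; ring

private lemma Abound (lam γ : ℝ) (hlam1 : lam < 1) (hb : 1 ≤ (1 - lam) * γ)
    (j : ℕ) (hj : 1 ≤ j) :
    Real.exp (-((1 - lam) * γ * (j : ℝ))) ≤
      ∑' k : ℕ, ((k : ℝ) + 1) *
        Real.exp (-(1 - lam) * γ * (((k : ℝ) + 1) * j + ((k : ℝ) + 1) * k / 2)) := by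
  have hj1 : (1 : ℝ) ≤ j := by exact_mod_cast hj
  set b : ℝ := (1 - lam) * γ with hb_def
  have hb0 : 0 < b := by linarith
  set q : ℝ := 2 * Real.exp (-b) with hq_def
  have hq0 : 0 ≤ q := by positivity
  have hqle : q ≤ 3 / 4 := by
    have hmono : Real.exp (-b) ≤ Real.exp (-1) := Real.exp_le_exp.2 (by linarith)
    calc q ≤ 2 * Real.exp (-1) := by rw [hq_def]; linarith
      _ ≤ 3 / 4 := ratio_le
  have hq1 : q < 1 := by linarith
  have hterm : ∀ k : ℕ, ((k : ℝ) + 1) *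
      Real.exp (-(1 - lam) * γ * (((k : ℝ) + 1) * j + ((k : ℝ) + 1) * k / 2))
      ≤ Real.exp (-b) * q ^ k := by
    intro k
    have hkn : (0:ℝ) ≤ (k : ℝ) := Nat.cast_nonneg k
    have hstep1 : Real.exp (-(1 - lam) * γ * (((k : ℝ) + 1) * j + ((k : ℝ) + 1) * k / 2))
        ≤ Real.exp (-b * ((k : ℝ) + 1)) := by
      apply Real.exp_le_exp.2
      have hge : (k : ℝ) + 1 ≤ ((k : ℝ) + 1) * j + ((k : ℝ) + 1) * k / 2 := by
        nlinarith [mul_nonneg (by linarith : (0:ℝ) ≤ (k:ℝ) + 1) (by linarith : (0:ℝ) ≤ (j:ℝ) - 1),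
          mul_nonneg (by linarith : (0:ℝ) ≤ (k:ℝ) + 1) hkn]
      nlinarith [mul_le_mul_of_nonneg_left hge hb0.le]
    have hsplit : Real.exp (-b * ((k : ℝ) + 1)) = Real.exp (-b) * Real.exp (-b) ^ k := by
      rw [← Real.exp_nat_mul, ← Real.exp_add]
      congr 1; ring
    have h2k := cast_succ_le_two_pow k
    calc ((k : ℝ) + 1) *
          Real.exp (-(1 - lam) * γ * (((k : ℝ) + 1) * j + ((k : ℝ) + 1) * k / 2))
        ≤ ((k : ℝ) + 1) * Real.exp (-b * ((k : ℝ) + 1)) := by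
          apply mul_le_mul_of_nonneg_left hstep1 (by linarith)
      _ ≤ (2 ^ k) * Real.exp (-b * ((k : ℝ) + 1)) := by
          apply mul_le_mul_of_nonneg_right h2k (Real.exp_pos _).le
      _ = Real.exp (-b) * q ^ k := by
          rw [hsplit, hq_def, mul_pow]; ring
  have hsumR : Summable (fun k : ℕ => Real.exp (-b) * q ^ k) :=
    (summable_geometric_of_lt_one hq0 hq1).mul_left _
  have hnonneg : ∀ k : ℕ, 0 ≤ ((k : ℝ) + 1) *
      Real.exp (-(1 - lam) * γ * (((k : ℝ) + 1) * j + ((k : ℝ) + 1) * k / 2)) := by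
    intro k; positivity
  have hsum : Summable (fun k : ℕ => ((k : ℝ) + 1) *
      Real.exp (-(1 - lam) * γ * (((k : ℝ) + 1) * j + ((k : ℝ) + 1) * k / 2))) :=
    Summable.of_nonneg_of_le hnonneg hterm hsumR
  have h0 : Real.exp (-((1 - lam) * γ * (j : ℝ)))
      = (((0 : ℕ) : ℝ) + 1) * Real.exp (-(1 - lam) * γ *
          ((((0 : ℕ) : ℝ) + 1) * j + (((0 : ℕ) : ℝ) + 1) * ((0 : ℕ) : ℝ) / 2)) := by
    norm_num
    ring_nf
  rw [h0]
  exact Summable.le_tsum hsum 0 (fun i _ => hnonneg i)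

private lemma main_bound (lam γ : ℝ) (hlam : 1 / 3 < lam) (hlam1 : lam < 1) (hγ : 1 ≤ γ)
    (hcγ : 2 ≤ (3 * lam - 1) / 2 * γ) (j : ℕ) (hj : 1 ≤ j) :
    ((∑ k ∈ Finset.Icc 1 (j - 1), (k : ℝ) *
        Real.exp (-(1 + lam) * γ * ((k : ℝ) * j - (k : ℝ) * ((k : ℝ) + 1) / 2))) +
     (∑' n : ℕ, ((j : ℝ) + n) *
        Real.exp (-(1 + lam) * γ * ((j : ℝ) * ((j : ℝ) - 1) / 2 + (n : ℝ) + 1)))) *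
      Real.exp ((1 - lam) * γ * (j : ℝ)) ≤ 5 * Real.exp (2 - (3 * lam - 1) / 2 * γ) := by
  have hlam0 : 0 < lam := by linarith
  have hγ0 : 0 < γ := by linarith
  set c : ℝ := (3 * lam - 1) / 2 with hc_def
  have hc : 0 < c := by rw [hc_def]; linarith
  have hj1 : (1 : ℝ) ≤ j := by exact_mod_cast hj
  have hBle := Bbound lam γ hlam0 hγ0 j hj
  have hCle := Cbound lam γ hlam0 hγ j hj
  have hE : (0:ℝ) < Real.exp ((1 - lam) * γ * (j : ℝ)) := Real.exp_pos _
  have h1 : ((j : ℝ) - 1) * j * Real.exp (-(1 + lam) * γ * ((j : ℝ) - 1)) *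
      Real.exp ((1 - lam) * γ * (j : ℝ)) ≤ (j : ℝ) ^ 2 * Real.exp (-(c * γ) * j) := by
    rcases eq_or_lt_of_le hj1 with h | h
    · rw [← h]
      norm_num
      positivity
    · have hj2 : (2 : ℝ) ≤ j := by
        have h2 : 2 ≤ j := by
          by_contra hcon
          push_neg at hcon
          interval_cases j
          · exact absurd h (by norm_num)
        exact_mod_cast h2
      have hexp : -(1 + lam) * γ * ((j : ℝ) - 1) + (1 - lam) * γ * j ≤ -(c * γ) * j := by
        rw [hc_def]
        nlinarith [mul_nonneg (mul_nonneg hγ0.le (by linarith : (0:ℝ) ≤ 1 + lam))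
          (by linarith : (0:ℝ) ≤ (j:ℝ) - 2)]
      have hfac : ((j : ℝ) - 1) * j ≤ (j : ℝ) ^ 2 := by nlinarith
      calc ((j : ℝ) - 1) * j * Real.exp (-(1 + lam) * γ * ((j : ℝ) - 1)) *
            Real.exp ((1 - lam) * γ * (j : ℝ))
          = ((j : ℝ) - 1) * j *
              Real.exp (-(1 + lam) * γ * ((j : ℝ) - 1) + (1 - lam) * γ * j) := by
            rw [Real.exp_add]; ring
        _ ≤ (j : ℝ) ^ 2 * Real.exp (-(c * γ) * j) :=
            mul_le_mul hfac (Real.exp_le_exp.2 hexp) (Real.exp_pos _).le (by positivity)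
  have h2 : 4 * (j : ℝ) * Real.exp (-(1 + lam) * γ * ((j : ℝ) * ((j : ℝ) - 1) / 2 + 1)) *
      Real.exp ((1 - lam) * γ * (j : ℝ)) ≤ 4 * (j : ℝ) ^ 2 * Real.exp (-(c * γ) * j) := by
    have hexp : -(1 + lam) * γ * ((j : ℝ) * ((j : ℝ) - 1) / 2 + 1) + (1 - lam) * γ * j
        ≤ -(c * γ) * j := by
      rw [hc_def]
      nlinarith [mul_nonneg (mul_nonneg hγ0.le (by linarith : (0:ℝ) ≤ 1 + lam))
          (sq_nonneg ((j:ℝ) - 1)),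
        mul_nonneg hγ0.le (by linarith : (0:ℝ) ≤ 1 + lam)]
    have hfac : 4 * (j : ℝ) ≤ 4 * (j : ℝ) ^ 2 := by nlinarith
    calc 4 * (j : ℝ) * Real.exp (-(1 + lam) * γ * ((j : ℝ) * ((j : ℝ) - 1) / 2 + 1)) *
          Real.exp ((1 - lam) * γ * (j : ℝ))
        = 4 * (j : ℝ) *
            Real.exp (-(1 + lam) * γ * ((j : ℝ) * ((j : ℝ) - 1) / 2 + 1) + (1 - lam) * γ * j) := by
          rw [Real.exp_add]; ring
      _ ≤ 4 * (j : ℝ) ^ 2 * Real.exp (-(c * γ) * j) :=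
          mul_le_mul hfac (Real.exp_le_exp.2 hexp) (Real.exp_pos _).le (by positivity)
  have hjexp : (j : ℝ) ^ 2 ≤ Real.exp (2 * (j : ℝ)) := by
    have ha : (j : ℝ) ≤ Real.exp (j : ℝ) := by
      have := Real.add_one_le_exp (j : ℝ); linarith
    calc (j : ℝ) ^ 2 ≤ Real.exp (j : ℝ) ^ 2 :=
          pow_le_pow_left₀ (by positivity) ha 2
      _ = Real.exp (2 * (j : ℝ)) := by
          rw [sq, ← Real.exp_add]; ring_nf
  calc ((∑ k ∈ Finset.Icc 1 (j - 1), (k : ℝ) *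
        Real.exp (-(1 + lam) * γ * ((k : ℝ) * j - (k : ℝ) * ((k : ℝ) + 1) / 2))) +
     (∑' n : ℕ, ((j : ℝ) + n) *
        Real.exp (-(1 + lam) * γ * ((j : ℝ) * ((j : ℝ) - 1) / 2 + (n : ℝ) + 1)))) *
      Real.exp ((1 - lam) * γ * (j : ℝ))
      ≤ (((j : ℝ) - 1) * j * Real.exp (-(1 + lam) * γ * ((j : ℝ) - 1)) +
          4 * j * Real.exp (-(1 + lam) * γ * ((j : ℝ) * ((j : ℝ) - 1) / 2 + 1))) *
          Real.exp ((1 - lam) * γ * (j : ℝ)) :=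
        mul_le_mul_of_nonneg_right (add_le_add hBle hCle) hE.le
    _ = ((j : ℝ) - 1) * j * Real.exp (-(1 + lam) * γ * ((j : ℝ) - 1)) *
          Real.exp ((1 - lam) * γ * (j : ℝ)) +
        4 * (j : ℝ) * Real.exp (-(1 + lam) * γ * ((j : ℝ) * ((j : ℝ) - 1) / 2 + 1)) *
          Real.exp ((1 - lam) * γ * (j : ℝ)) := by ring
    _ ≤ (j : ℝ) ^ 2 * Real.exp (-(c * γ) * j) + 4 * (j : ℝ) ^ 2 * Real.exp (-(c * γ) * j) :=
        add_le_add h1 h2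
    _ = 5 * (j : ℝ) ^ 2 * Real.exp (-(c * γ) * j) := by ring
    _ ≤ 5 * Real.exp (2 * (j : ℝ)) * Real.exp (-(c * γ) * j) := by
        apply mul_le_mul_of_nonneg_right _ (Real.exp_pos _).le
        linarith [hjexp]
    _ = 5 * Real.exp (2 * (j : ℝ) - c * γ * j) := by
        rw [mul_assoc, ← Real.exp_add]; ring_nf
    _ ≤ 5 * Real.exp (2 - c * γ) := by
        apply mul_le_mul_of_nonneg_left (Real.exp_le_exp.2 _) (by norm_num)
        nlinarith [mul_nonneg (by linarith : (0:ℝ) ≤ (j:ℝ) - 1)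
          (by linarith : (0:ℝ) ≤ c * γ - 2)]

/-- With
`A(λ,γ,j) = ∑_{k≥1} k e^{-(1-λ)γ(kj + k(k-1)/2)}`,
`B(λ,γ,j) = ∑_{1≤k≤j-1} k e^{-(1+λ)γ(kj - k(k+1)/2)}`,
`C(λ,γ,j) = ∑_{k≥j} k e^{-(1+λ)γ(j(j-1)/2 + k - j + 1)}`,
if `λ ∈ (1/3, 1)` then `sup_{j≥1} (B+C) e^{(1-λ)γj} → 0` as `γ → ∞`; in particular for `γ`
large enough `A > B + C` for every `j ≥ 1` (as `A ≥ e^{-(1-λ)γj}`). -/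
theorem stmt18 (lam : ℝ) (hlam : 1 / 3 < lam) (hlam1 : lam < 1)
    (A B C : ℝ → ℕ → ℝ)
    (hA : ∀ γ : ℝ, ∀ j : ℕ, A γ j =
      ∑' k : ℕ, ((k : ℝ) + 1) *
        Real.exp (-(1 - lam) * γ * (((k : ℝ) + 1) * j + ((k : ℝ) + 1) * k / 2)))
    (hB : ∀ γ : ℝ, ∀ j : ℕ, B γ j =
      ∑ k ∈ Finset.Icc 1 (j - 1), (k : ℝ) *
        Real.exp (-(1 + lam) * γ * ((k : ℝ) * j - (k : ℝ) * ((k : ℝ) + 1) / 2)))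
    (hC : ∀ γ : ℝ, ∀ j : ℕ, C γ j =
      ∑' n : ℕ, ((j : ℝ) + n) *
        Real.exp (-(1 + lam) * γ * ((j : ℝ) * ((j : ℝ) - 1) / 2 + (n : ℝ) + 1))) :
    (∀ ε : ℝ, 0 < ε → ∃ γ₀ : ℝ, 1 ≤ γ₀ ∧ ∀ γ : ℝ, γ₀ ≤ γ → ∀ j : ℕ, 1 ≤ j →
        (B γ j + C γ j) * Real.exp ((1 - lam) * γ * j) < ε) ∧
    (∃ γ₀ : ℝ, 1 ≤ γ₀ ∧ ∀ γ : ℝ, γ₀ ≤ γ → ∀ j : ℕ, 1 ≤ j →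
        B γ j + C γ j < A γ j) := by
  have hc : (0:ℝ) < (3 * lam - 1) / 2 := by linarith
  have part1 : ∀ ε : ℝ, 0 < ε → ∃ γ₀ : ℝ, 1 ≤ γ₀ ∧ ∀ γ : ℝ, γ₀ ≤ γ → ∀ j : ℕ, 1 ≤ j →
      (B γ j + C γ j) * Real.exp ((1 - lam) * γ * j) < ε := by
    intro ε hε
    set c : ℝ := (3 * lam - 1) / 2 with hc_def
    set m : ℝ := max 0 (Real.log (5 / ε)) with hm_def
    refine ⟨max 1 ((3 + m) / c), le_max_left _ _, ?_⟩
    intro γ hγ j hj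
    have hγ1 : 1 ≤ γ := le_trans (le_max_left _ _) hγ
    have hγ2 : (3 + m) / c ≤ γ := le_trans (le_max_right _ _) hγ
    have hm0 : 0 ≤ m := le_max_left _ _
    have hmlog : Real.log (5 / ε) ≤ m := le_max_right _ _
    have hcγ : 3 + m ≤ c * γ := by
      rw [div_le_iff₀ hc] at hγ2; linarith
    have hcγ2 : 2 ≤ c * γ := by linarith
    rw [hB, hC]
    calc ((∑ k ∈ Finset.Icc 1 (j - 1), (k : ℝ) *
          Real.exp (-(1 + lam) * γ * ((k : ℝ) * j - (k : ℝ) * ((k : ℝ) + 1) / 2))) +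
       (∑' n : ℕ, ((j : ℝ) + n) *
          Real.exp (-(1 + lam) * γ * ((j : ℝ) * ((j : ℝ) - 1) / 2 + (n : ℝ) + 1)))) *
        Real.exp ((1 - lam) * γ * (j : ℝ))
        ≤ 5 * Real.exp (2 - c * γ) :=
          main_bound lam γ hlam hlam1 hγ1 hcγ2 j hj
      _ ≤ 5 * Real.exp (-1 - Real.log (5 / ε)) := by
          apply mul_le_mul_of_nonneg_left (Real.exp_le_exp.2 (by linarith)) (by norm_num)
      _ < ε := by
          rw [sub_eq_add_neg, Real.exp_add, Real.exp_neg (Real.log (5 / ε)),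
            Real.exp_log (by positivity : (0:ℝ) < 5 / ε), inv_div]
          have he1 : Real.exp (-1) < 1 := by
            nlinarith [Real.exp_one_gt_d9, Real.exp_pos (-1),
              (by rw [← Real.exp_add]; norm_num : Real.exp 1 * Real.exp (-1) = 1)]
          nlinarith [mul_pos hε (by linarith : (0:ℝ) < 1 - Real.exp (-1))]
  refine ⟨part1, ?_⟩
  obtain ⟨γ₁, hγ₁1, hγ₁⟩ := part1 1 one_pos
  refine ⟨max γ₁ (1 / (1 - lam)), le_trans hγ₁1 (le_max_left _ _), ?_⟩
  intro γ hγ j hj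
  have hγγ₁ : γ₁ ≤ γ := le_trans (le_max_left _ _) hγ
  have hbγ : 1 ≤ (1 - lam) * γ := by
    have h' : 1 / (1 - lam) ≤ γ := le_trans (le_max_right _ _) hγ
    rw [div_le_iff₀ (by linarith : (0:ℝ) < 1 - lam)] at h'
    linarith
  have h3 := hγ₁ γ hγγ₁ j hj
  have hE : (0:ℝ) < Real.exp ((1 - lam) * γ * (j : ℝ)) := Real.exp_pos _
  have hlt : B γ j + C γ j < Real.exp (-((1 - lam) * γ * (j : ℝ))) := by
    rw [Real.exp_neg]
    have hd := (lt_div_iff₀ hE).mpr h3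
    rwa [one_div] at hd
  have hAge : Real.exp (-((1 - lam) * γ * (j : ℝ))) ≤ A γ j := by
    rw [hA]
    exact Abound lam γ hlam1 hbγ j hj
  linarith
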